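/- Define f(c) := sup_{φ ∈ [0, 2π]} |A_k(c, φ)|² where |A_k|² is given by the Case C formula: |A_k|² = ((2/3)c³ sin φ + (1/6)c³ sin 2φ − (1/3)c³ sin 3φ − c² sin φ + (1/2)c² sin 2φ − c sin φ)² + (−(7/3)c³ cos φ − (1/6)c³ cos 2φ + (1/3)c³ cos 3φ + (13/6)c³ + 3c² cos φ − (1/2)c² cos 2φ − (5/2)c² + 1)². Then there exists φ such that |A_k(0.4, φ)|² > 1. -/
import Mathlib

noncomputable section

/-- The Case C squared amplification factor (equation (34) of the paper). -/
def caseCAmp2 (c φ : ℝ) : ℝ :=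
  ((2/3) * c ^ 3 * Real.sin φ + (1/6) * c ^ 3 * Real.sin (2 * φ)
      - (1/3) * c ^ 3 * Real.sin (3 * φ) - c ^ 2 * Real.sin φ
      + (1/2) * c ^ 2 * Real.sin (2 * φ) - c * Real.sin φ) ^ 2
    + (-(7/3) * c ^ 3 * Real.cos φ - (1/6) * c ^ 3 * Real.cos (2 * φ)
      + (1/3) * c ^ 3 * Real.cos (3 * φ) + (13/6) * c ^ 3
      + 3 * c ^ 2 * Real.cos φ - (1/2) * c ^ 2 * Real.cos (2 * φ)
      - (5/2) * c ^ 2 + 1) ^ 2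

/-- At Courant number `c = 0.4`, above the critical value `c* ≈ 0.3625`, some
Fourier mode of the Case C scheme is amplified. -/
theorem stmt_14 : ∃ φ : ℝ, caseCAmp2 0.4 φ > 1 := by
  refine ⟨Real.arccos (3/4), ?_⟩
  have hc : Real.cos (Real.arccos (3/4)) = 3/4 :=
    Real.cos_arccos (by norm_num) (by norm_num)
  have hs : Real.sin (Real.arccos (3/4)) ^ 2 = 7/16 := by
    have h := Real.sin_sq_add_cos_sq (Real.arccos (3/4))
    rw [hc] at h; nlinarith
  unfold caseCAmp2
  rw [Real.sin_two_mul, Real.sin_three_mul, Real.cos_two_mul, Real.cos_three_mul, hc]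
  set s := Real.sin (Real.arccos (3/4)) with hsdef
  have h4 : s ^ 4 = 49/256 := by nlinarith
  have h6 : s ^ 6 = 343/4096 := by nlinarith
  nlinarith [hs, h4, h6]
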